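/- arXiv:2404.04063 — 10 statements merged into one kernel-verified Lean document; each statement's English description precedes it below -/
import Mathlib

section
/- Let λ > 0 and let a, b ∈ ℝ^N be nonzero. Then ⟨T_λ a − T_λ b, a − b⟩ ≤ (1/2)(‖T_λ a‖/‖a‖ + ‖T_λ b‖/‖b‖)‖a − b‖². -/
open RealInnerProductSpace

/-- The truncation operator `T_λ` on `ℝ^N`:
`T_λ a = a` if `‖a‖ ≤ λ`, and `T_λ a = λ a / ‖a‖` if `‖a‖ > λ`. -/
noncomputable def trunc {N : ℕ} (lam : ℝ) (a : EuclideanSpace ℝ (Fin N)) :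
    EuclideanSpace ℝ (Fin N) :=
  if ‖a‖ ≤ lam then a else (lam / ‖a‖) • a

/-- For `λ > 0` and nonzero `a, b ∈ ℝ^N`,
`⟨T_λ a − T_λ b, a − b⟩ ≤ (1/2)(‖T_λ a‖/‖a‖ + ‖T_λ b‖/‖b‖)‖a − b‖²`. -/
theorem trunc_inner_upper_bound {N : ℕ} (lam : ℝ) (hlam : 0 < lam)
    (a b : EuclideanSpace ℝ (Fin N)) (ha : a ≠ 0) (hb : b ≠ 0) :
    ⟪trunc lam a - trunc lam b, a - b⟫ ≤
      (1 / 2) * (‖trunc lam a‖ / ‖a‖ + ‖trunc lam b‖ / ‖b‖) * ‖a - b‖ ^ 2 := by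
  have hx : (0:ℝ) < ‖a‖ := norm_pos_iff.mpr ha
  have hy : (0:ℝ) < ‖b‖ := norm_pos_iff.mpr hb
  set α := min 1 (lam / ‖a‖) with hα
  set β := min 1 (lam / ‖b‖) with hβ
  have hα0 : 0 ≤ α := le_min zero_le_one (div_nonneg hlam.le hx.le)
  have hβ0 : 0 ≤ β := le_min zero_le_one (div_nonneg hlam.le hy.le)
  have hta : trunc lam a = α • a := by
    unfold trunc
    split_ifs with h
    · rw [hα, min_eq_left ((one_le_div hx).mpr h), one_smul]
    · rw [hα, min_eq_right ((div_le_one hx).mpr (le_of_lt (lt_of_not_ge h)))]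
  have htb : trunc lam b = β • b := by
    unfold trunc
    split_ifs with h
    · rw [hβ, min_eq_left ((one_le_div hy).mpr h), one_smul]
    · rw [hβ, min_eq_right ((div_le_one hy).mpr (le_of_lt (lt_of_not_ge h)))]
  have hna : ‖trunc lam a‖ = α * ‖a‖ := by
    rw [hta, norm_smul, Real.norm_eq_abs, abs_of_nonneg hα0]
  have hnb : ‖trunc lam b‖ = β * ‖b‖ := by
    rw [htb, norm_smul, Real.norm_eq_abs, abs_of_nonneg hβ0]
  have hkey : (α - β) * (‖a‖ ^ 2 - ‖b‖ ^ 2) ≤ 0 := by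
    rcases le_total ‖a‖ ‖b‖ with h | h
    · have hαβ : β ≤ α := min_le_min le_rfl (div_le_div_of_nonneg_left hlam.le hx h)
      have h2 : ‖a‖ ^ 2 ≤ ‖b‖ ^ 2 := by nlinarith
      nlinarith
    · have hαβ : α ≤ β := min_le_min le_rfl (div_le_div_of_nonneg_left hlam.le hy h)
      have h2 : ‖b‖ ^ 2 ≤ ‖a‖ ^ 2 := by nlinarith
      nlinarith
  have hsub : ‖a - b‖ ^ 2 = ‖a‖ ^ 2 - 2 * ⟪a, b⟫ + ‖b‖ ^ 2 := norm_sub_sq_real a b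
  have hinner : ⟪trunc lam a - trunc lam b, a - b⟫ =
      α * ‖a‖ ^ 2 - α * ⟪a, b⟫ - β * ⟪a, b⟫ + β * ‖b‖ ^ 2 := by
    rw [hta, htb]
    simp only [inner_sub_left, inner_sub_right, real_inner_smul_left,
      real_inner_self_eq_norm_sq, real_inner_comm b a]
    ring
  rw [hinner, hna, hnb, hsub]
  rw [mul_div_assoc, mul_div_assoc, div_self hx.ne', div_self hy.ne', mul_one, mul_one]
  nlinarith [hkey]
end

section
/- Let λ > 0 and let a, b ∈ ℝ^N be nonzero. Then ⟨S_λ a − S_λ b, a − b⟩ ≥ (1/2)(‖S_λ a‖/‖a‖ + ‖S_λ b‖/‖b‖)‖a − b‖². -/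
open RealInnerProductSpace

/-- The shortening operator `S_λ` on `ℝ^N`:
`S_λ a = 0` if `‖a‖ ≤ λ`, and `S_λ a = (‖a‖ − λ) a / ‖a‖` if `‖a‖ > λ`. -/
noncomputable def shorten {N : ℕ} (lam : ℝ) (a : EuclideanSpace ℝ (Fin N)) :
    EuclideanSpace ℝ (Fin N) :=
  if ‖a‖ ≤ lam then 0 else ((‖a‖ - lam) / ‖a‖) • a

lemma shorten_eq_smul {N : ℕ} (lam : ℝ) (a : EuclideanSpace ℝ (Fin N)) (ha : a ≠ 0) :
    shorten lam a = (max 0 (1 - lam / ‖a‖)) • a := by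
  have hna : (0:ℝ) < ‖a‖ := norm_pos_iff.mpr ha
  unfold shorten
  split_ifs with h
  · rw [max_eq_left, zero_smul]
    have : (1:ℝ) ≤ lam / ‖a‖ := (one_le_div hna).mpr h
    linarith
  · push_neg at h
    rw [max_eq_right]
    · congr 1; field_simp
    · have : lam / ‖a‖ < 1 := (div_lt_one hna).mpr h
      linarith

lemma norm_shorten_div {N : ℕ} (lam : ℝ) (a : EuclideanSpace ℝ (Fin N)) (ha : a ≠ 0) :
    ‖shorten lam a‖ / ‖a‖ = max 0 (1 - lam / ‖a‖) := by
  have hna : (0:ℝ) < ‖a‖ := norm_pos_iff.mpr ha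
  rw [shorten_eq_smul lam a ha, norm_smul, Real.norm_eq_abs,
    abs_of_nonneg (le_max_left _ _), mul_div_assoc, div_self hna.ne', mul_one]

/-- For `λ > 0` and nonzero `a, b ∈ ℝ^N`,
`⟨S_λ a − S_λ b, a − b⟩ ≥ (1/2)(‖S_λ a‖/‖a‖ + ‖S_λ b‖/‖b‖)‖a − b‖²`. -/
theorem shorten_inner_lower_bound {N : ℕ} (lam : ℝ) (hlam : 0 < lam)
    (a b : EuclideanSpace ℝ (Fin N)) (ha : a ≠ 0) (hb : b ≠ 0) :
    ⟪shorten lam a - shorten lam b, a - b⟫ ≥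
      (1 / 2) * (‖shorten lam a‖ / ‖a‖ + ‖shorten lam b‖ / ‖b‖) * ‖a - b‖ ^ 2 := by
  have hna : (0:ℝ) < ‖a‖ := norm_pos_iff.mpr ha
  have hnb : (0:ℝ) < ‖b‖ := norm_pos_iff.mpr hb
  set α : ℝ := max 0 (1 - lam / ‖a‖) with hα
  set β : ℝ := max 0 (1 - lam / ‖b‖) with hβ
  rw [norm_shorten_div lam a ha, norm_shorten_div lam b hb,
    shorten_eq_smul lam a ha, shorten_eq_smul lam b hb]
  have hsign : (α - β) * (‖a‖ ^ 2 - ‖b‖ ^ 2) ≥ 0 := by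
    rcases le_total ‖a‖ ‖b‖ with h | h
    · have hαβ : α ≤ β := by
        apply max_le_max le_rfl
        have : lam / ‖b‖ ≤ lam / ‖a‖ := div_le_div_of_nonneg_left hlam.le hna h
        linarith
      have : ‖a‖ ^ 2 ≤ ‖b‖ ^ 2 := by nlinarith
      nlinarith
    · have hβα : β ≤ α := by
        apply max_le_max le_rfl
        have : lam / ‖a‖ ≤ lam / ‖b‖ := div_le_div_of_nonneg_left hlam.le hnb h
        linarith
      have : ‖b‖ ^ 2 ≤ ‖a‖ ^ 2 := by nlinarith
      nlinarith
  have hexp : ⟪α • a - β • b, a - b⟫ =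
      α * ⟪a,a⟫ - α * ⟪a,b⟫ - β * ⟪b,a⟫ + β * ⟪b,b⟫ := by
    rw [inner_sub_left, inner_sub_right, inner_sub_right,
      real_inner_smul_left, real_inner_smul_left, real_inner_smul_left,
      real_inner_smul_left]
    ring
  have hnorm : ‖a - b‖ ^ 2 = ⟪a,a⟫ - 2 * ⟪a,b⟫ + ⟪b,b⟫ := by
    rw [@norm_sub_sq_real, real_inner_self_eq_norm_sq, real_inner_self_eq_norm_sq]
  have haa : ⟪a,a⟫ = ‖a‖ ^ 2 := real_inner_self_eq_norm_sq a
  have hbb : ⟪b,b⟫ = ‖b‖ ^ 2 := real_inner_self_eq_norm_sq b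
  have hab : ⟪b,a⟫ = ⟪a,b⟫ := real_inner_comm a b
  rw [hexp, hnorm, hab, haa, hbb, ← hα, ← hβ]
  nlinarith [hsign]
end

section
/- Let λ > 0 and let a ∈ ℝ^N satisfy ‖a‖ > λ. Then the shortening operator S_λ is (Fréchet) differentiable at a, and its derivative is the linear map h ↦ ((‖a‖ − λ)/‖a‖) h + (λ/‖a‖) ⟨a/‖a‖, h⟩ a/‖a‖. Moreover, for every h ∈ ℝ^N one has ((‖a‖ − λ)/‖a‖)‖h‖² ≤ ⟨D S_λ(a) h, h⟩ and ((‖a‖ − λ)/‖a‖)‖h‖ ≤ ‖D S_λ(a) h‖ ≤ ‖h‖. -/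
open RealInnerProductSpace

private lemma shorten_aux_ineq (α β c nh m : ℝ) (hα : 0 < α) (hβ : 0 < β)
    (hab : α + β = 1) (hcs : c ^ 2 ≤ nh ^ 2) (hnh : 0 ≤ nh) (hm : 0 ≤ m)
    (hmsq : m ^ 2 = α ^ 2 * nh ^ 2 + (2 * α * β + β ^ 2) * c ^ 2) :
    α * nh ≤ m ∧ m ≤ nh := by
  constructor
  · nlinarith [sq_nonneg c, mul_nonneg (mul_nonneg hα.le hβ.le) (sq_nonneg c),
      mul_nonneg (mul_nonneg hβ.le hβ.le) (sq_nonneg c),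
      mul_nonneg hα.le hnh]
  · have h1 : (α + β) ^ 2 = 1 := by rw [hab]; norm_num
    have hsq : m ^ 2 ≤ nh ^ 2 := by
      nlinarith [h1, mul_nonneg (mul_nonneg hα.le hβ.le) (sub_nonneg.mpr hcs),
        mul_nonneg (mul_nonneg hβ.le hβ.le) (sub_nonneg.mpr hcs)]
    exact (pow_le_pow_iff_left₀ hm hnh two_ne_zero).mp hsq

/-- For `λ > 0` and `a ∈ ℝ^N` with `‖a‖ > λ`, the shortening operator
`S_λ` is Fréchet differentiable at `a` with derivative
`h ↦ ((‖a‖ − λ)/‖a‖) h + (λ/‖a‖) ⟨a/‖a‖, h⟩ a/‖a‖`; moreover, the derivative `L`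
satisfies `((‖a‖ − λ)/‖a‖)‖h‖² ≤ ⟨L h, h⟩` and `((‖a‖ − λ)/‖a‖)‖h‖ ≤ ‖L h‖ ≤ ‖h‖`
for every `h`. -/
theorem shorten_hasFDerivAt {N : ℕ} (lam : ℝ) (hlam : 0 < lam)
    (a : EuclideanSpace ℝ (Fin N)) (ha : lam < ‖a‖) :
    ∃ L : EuclideanSpace ℝ (Fin N) →L[ℝ] EuclideanSpace ℝ (Fin N),
      HasFDerivAt (shorten lam) L a ∧
      (∀ h, L h = ((‖a‖ - lam) / ‖a‖) • h
          + (lam / ‖a‖) • ⟪(1 / ‖a‖) • a, h⟫ • ((1 / ‖a‖) • a)) ∧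
      (∀ h, ((‖a‖ - lam) / ‖a‖) * ‖h‖ ^ 2 ≤ ⟪L h, h⟫) ∧
      (∀ h, ((‖a‖ - lam) / ‖a‖) * ‖h‖ ≤ ‖L h‖ ∧ ‖L h‖ ≤ ‖h‖) := by
  classical
  have hn : (0:ℝ) < ‖a‖ := hlam.trans ha
  have hn0 : ‖a‖ ≠ 0 := ne_of_gt hn
  set u : EuclideanSpace ℝ (Fin N) := (1 / ‖a‖) • a with hu
  set L : EuclideanSpace ℝ (Fin N) →L[ℝ] EuclideanSpace ℝ (Fin N) :=
    ((‖a‖ - lam) / ‖a‖) • ContinuousLinearMap.id ℝ (EuclideanSpace ℝ (Fin N))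
      + (lam / ‖a‖) • ((innerSL ℝ u).smulRight u) with hL
  have hfor : ∀ h, L h = ((‖a‖ - lam) / ‖a‖) • h
      + (lam / ‖a‖) • ⟪u, h⟫ • u := by
    intro h
    simp [hL]
  have hqa : ⟪a, a⟫ ≠ 0 := by
    rw [real_inner_self_eq_norm_sq]; positivity
  have hq := (hasFDerivAt_id (𝕜 := ℝ) a).inner ℝ (hasFDerivAt_id a)
  have hsq := hq.sqrt hqa
  have hsqa : Real.sqrt ⟪a, a⟫ = ‖a‖ := by
    rw [real_inner_self_eq_norm_mul_norm, Real.sqrt_mul_self (norm_nonneg a)]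
  have hsqa0 : Real.sqrt ⟪(id a : EuclideanSpace ℝ (Fin N)), id a⟫ ≠ 0 := by
    simp only [id_eq, hsqa]; exact hn0
  have hinv := (hasDerivAt_inv hsqa0).comp_hasFDerivAt a hsq
  simp only [Function.comp_def] at hinv
  have hsub := hsq.sub_const lam
  have hc := hsub.mul hinv
  have hf := hc.smul (hasFDerivAt_id (𝕜 := ℝ) a)
  have heq : shorten lam =ᶠ[nhds a]
      fun x : EuclideanSpace ℝ (Fin N) =>
        ((Real.sqrt ⟪x, x⟫ - lam) * (Real.sqrt ⟪x, x⟫)⁻¹) • x := by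
    have hopen : IsOpen {x : EuclideanSpace ℝ (Fin N) | lam < ‖x‖} :=
      isOpen_lt continuous_const continuous_norm
    filter_upwards [hopen.mem_nhds (by simpa using ha)] with x hx
    have hxs : Real.sqrt ⟪x, x⟫ = ‖x‖ := by
      rw [real_inner_self_eq_norm_mul_norm, Real.sqrt_mul_self (norm_nonneg x)]
    simp only [shorten, if_neg (not_le.mpr hx)]
    rw [hxs, div_eq_mul_inv]
  have hDL : HasFDerivAt (shorten lam) L a := by
    refine (hf.congr_of_eventuallyEq heq).congr_fderiv ?_
    refine ContinuousLinearMap.ext fun h => ?_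
    simp only [hL, hu, ContinuousLinearMap.add_apply, ContinuousLinearMap.smul_apply,
      ContinuousLinearMap.coe_smul', Pi.smul_apply, ContinuousLinearMap.id_apply,
      ContinuousLinearMap.smulRight_apply, ContinuousLinearMap.comp_apply,
      ContinuousLinearMap.prod_apply, fderivInnerCLM_apply, innerSL_apply_apply,
      real_inner_smul_left, id_eq, hsqa, smul_eq_mul, Pi.mul_apply]
    rw [real_inner_comm h a]
    match_scalars <;> field_simp <;> ring
  clear hf hc hsub hinv hsq hq heq hqa hsqa hsqa0
  have hun : ‖u‖ = 1 := by
    rw [hu, norm_smul]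
    simp [abs_of_pos (by positivity : (0:ℝ) < 1 / ‖a‖), hn0]
  have halpha : 0 < (‖a‖ - lam) / ‖a‖ := div_pos (by linarith) hn
  have hbeta : 0 < lam / ‖a‖ := div_pos hlam hn
  have hab : (‖a‖ - lam) / ‖a‖ + lam / ‖a‖ = 1 := by field_simp; ring
  refine ⟨L, hDL, fun h => hfor h, ?_, ?_⟩
  · intro h
    rw [hfor h]
    rw [inner_add_left, real_inner_smul_left, real_inner_smul_left, real_inner_smul_left,
      real_inner_self_eq_norm_sq]
    nlinarith [mul_self_nonneg (⟪u, h⟫ : ℝ), hbeta.le,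
      mul_nonneg hbeta.le (mul_self_nonneg (⟪u, h⟫ : ℝ))]
  · intro h
    have hcs : (⟪u, h⟫ : ℝ) ^ 2 ≤ ‖h‖ ^ 2 := by
      have h1 := abs_real_inner_le_norm u h
      rw [hun, one_mul] at h1
      nlinarith [abs_nonneg (⟪u, h⟫ : ℝ), le_abs_self (⟪u, h⟫ : ℝ), neg_abs_le (⟪u, h⟫ : ℝ),
        sq_abs (⟪u, h⟫ : ℝ), norm_nonneg h]
    have hLsq : ‖L h‖ ^ 2 = ((‖a‖ - lam) / ‖a‖) ^ 2 * ‖h‖ ^ 2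
        + (2 * ((‖a‖ - lam) / ‖a‖) * (lam / ‖a‖) + (lam / ‖a‖) ^ 2) * ⟪u, h⟫ ^ 2 := by
      rw [hfor h, smul_smul, norm_add_sq_real, real_inner_smul_left, real_inner_smul_right,
        real_inner_comm h u]
      rw [norm_smul, norm_smul]
      simp only [Real.norm_eq_abs, mul_pow, sq_abs]
      try rw [hun]
      try ring
    exact shorten_aux_ineq _ _ _ _ _ halpha hbeta hab hcs (norm_nonneg h) (norm_nonneg (L h))
      (by rw [hLsq])
end

section
/- Let λ > 0, let f : ℝ^n → ℝ^N be differentiable at a point x with ‖f(x)‖ ≠ λ. Then the composition T_λ ∘ f is differentiable at x and, with G = Df(x) and H = D(T_λ ∘ f)(x), one has ‖H‖_F² ≤ ⟪G, H⟫_F ≤ ‖G‖_F². -/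
open RealInnerProductSpace

/-- The Frobenius inner product `⟪A, B⟫_F = ∑ i ⟨A eᵢ, B eᵢ⟩` of two linear maps
`ℝ^n → ℝ^N`, where `(eᵢ)` is the standard basis of `ℝ^n`. -/
noncomputable def frobInner {n N : ℕ}
    (A B : EuclideanSpace ℝ (Fin n) →L[ℝ] EuclideanSpace ℝ (Fin N)) : ℝ :=
  ∑ i : Fin n, ⟪A (EuclideanSpace.single i 1), B (EuclideanSpace.single i 1)⟫

/-- The Frobenius norm `‖A‖_F = ⟪A, A⟫_F^{1/2}`. -/
noncomputable def frobNorm {n N : ℕ}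
    (A : EuclideanSpace ℝ (Fin n) →L[ℝ] EuclideanSpace ℝ (Fin N)) : ℝ :=
  Real.sqrt (frobInner A A)

lemma frobInner_self_nonneg {n N : ℕ}
    (A : EuclideanSpace ℝ (Fin n) →L[ℝ] EuclideanSpace ℝ (Fin N)) :
    0 ≤ frobInner A A :=
  Finset.sum_nonneg fun _ _ => real_inner_self_nonneg

lemma frobNorm_sq {n N : ℕ}
    (A : EuclideanSpace ℝ (Fin n) →L[ℝ] EuclideanSpace ℝ (Fin N)) :
    frobNorm A ^ 2 = frobInner A A :=
  Real.sq_sqrt (frobInner_self_nonneg A)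

/-- Derivative of the norm away from 0. -/
lemma hasFDerivAt_norm_aux {N : ℕ} (a : EuclideanSpace ℝ (Fin N)) (ha : a ≠ 0) :
    HasFDerivAt (fun b : EuclideanSpace ℝ (Fin N) => ‖b‖) (‖a‖⁻¹ • innerSL ℝ a) a := by
  have ha0 : 0 < ‖a‖ := norm_pos_iff.mpr ha
  have h0 : (‖a‖ : ℝ) ^ 2 ≠ 0 := pow_ne_zero _ ha0.ne'
  have h1 := (Real.hasDerivAt_sqrt h0).comp_hasFDerivAt a ((hasFDerivAt_id a).norm_sq)
  have h2 : (fun b : EuclideanSpace ℝ (Fin N) => ‖b‖) =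
      Real.sqrt ∘ (fun b : EuclideanSpace ℝ (Fin N) => ‖b‖ ^ 2) :=
    funext fun b => (Real.sqrt_sq (norm_nonneg b)).symm
  rw [h2]
  refine h1.congr_fderiv ?_
  ext v
  simp [Real.sqrt_sq ha0.le, ContinuousLinearMap.smul_apply]
  field_simp

/-- Pointwise inequality for the truncated vector. -/
lemma key_ineq {N : ℕ} (lam : ℝ) (hlam : 0 < lam) (a w : EuclideanSpace ℝ (Fin N))
    (hr : lam < ‖a‖) :
    ⟪(lam * ‖a‖⁻¹) • w + (lam * (-(‖a‖ ^ 2)⁻¹ * (‖a‖⁻¹ * ⟪a, w⟫))) • a,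
      (lam * ‖a‖⁻¹) • w + (lam * (-(‖a‖ ^ 2)⁻¹ * (‖a‖⁻¹ * ⟪a, w⟫))) • a⟫ ≤
      ⟪w, (lam * ‖a‖⁻¹) • w + (lam * (-(‖a‖ ^ 2)⁻¹ * (‖a‖⁻¹ * ⟪a, w⟫))) • a⟫ ∧
    ⟪w, (lam * ‖a‖⁻¹) • w + (lam * (-(‖a‖ ^ 2)⁻¹ * (‖a‖⁻¹ * ⟪a, w⟫))) • a⟫ ≤ ⟪w, w⟫ := by
  have hr0 : 0 < ‖a‖ := hlam.trans hr
  set r := ‖a‖ with hrdef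
  set t : ℝ := ⟪a, w⟫ with htdef
  set W : ℝ := ⟪w, w⟫ with hWdef
  set c : ℝ := lam * r⁻¹ with hcdef
  set d : ℝ := lam * (-(r ^ 2)⁻¹ * (r⁻¹ * t)) with hddef
  set Hv : EuclideanSpace ℝ (Fin N) := c • w + d • a with hHvdef
  have haa : ⟪a, a⟫ = r ^ 2 := real_inner_self_eq_norm_sq a
  have hwa : ⟪w, a⟫ = t := (real_inner_comm w a).symm
  have hcs : t * t ≤ r ^ 2 * W := by
    have := real_inner_mul_inner_self_le a w
    rwa [haa, ← htdef, ← hWdef] at this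
  have hww : (0:ℝ) ≤ W := real_inner_self_nonneg
  have hHv : ∀ u : EuclideanSpace ℝ (Fin N), ⟪u, Hv⟫ = c * ⟪u, w⟫ + d * ⟪u, a⟫ := by
    intro u
    rw [hHvdef, inner_add_right, real_inner_smul_right, real_inner_smul_right]
  have hwH : ⟪w, Hv⟫ = c * W + d * t := by rw [hHv w, ← hWdef, hwa]
  have haH : ⟪a, Hv⟫ = c * t + d * r ^ 2 := by rw [hHv a, ← htdef, haa]
  have hHH : ⟪Hv, Hv⟫ = c * (c * W + d * t) + d * (c * t + d * r ^ 2) := by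
    rw [hHv Hv, ← real_inner_comm Hv w, ← real_inner_comm Hv a, hwH, haH]
  -- scalar facts
  have hc0 : 0 < c := by rw [hcdef]; positivity
  have hc1 : c < 1 := by
    rw [hcdef, ← div_eq_mul_inv]
    exact (div_lt_one hr0).mpr hr
  have hdr : d * r ^ 2 = -(c * t) := by
    rw [hcdef, hddef]
    field_simp
  have hdtexp : d * t = -(lam * r⁻¹ * (r ^ 2)⁻¹ * t ^ 2) := by rw [hddef]; ring
  have h5 : 0 ≤ c * W + d * t := by
    rw [hdtexp, hcdef]
    have h7 : lam * r⁻¹ * (r ^ 2)⁻¹ * t ^ 2 ≤ lam * r⁻¹ * (r ^ 2)⁻¹ * (r ^ 2 * W) :=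
      mul_le_mul_of_nonneg_left (by nlinarith [hcs] : t ^ 2 ≤ r ^ 2 * W) (by positivity)
    have h8 : lam * r⁻¹ * (r ^ 2)⁻¹ * (r ^ 2 * W) = lam * r⁻¹ * W := by
      field_simp
    linarith
  have hdt0 : d * t ≤ 0 := by
    rw [hdtexp]
    exact neg_nonpos.mpr (by positivity)
  constructor
  · show ⟪Hv, Hv⟫ ≤ ⟪w, Hv⟫
    rw [hHH, hwH]
    have h9 : d * (c * t + d * r ^ 2) = 0 := by
      rw [mul_add, show d * (d * r ^ 2) = d * r ^ 2 * d by ring, hdr]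
      ring
    rw [h9, add_zero]
    nlinarith [mul_le_mul_of_nonneg_right hc1.le h5]
  · show ⟪w, Hv⟫ ≤ W
    rw [hwH]
    nlinarith [mul_le_mul_of_nonneg_right hc1.le hww]

/-- Let `λ > 0` and let `f : ℝ^n → ℝ^N` be differentiable at `x` with
`‖f x‖ ≠ λ`. Then `T_λ ∘ f` is differentiable at `x` and, with `G = Df(x)` and
`H = D(T_λ ∘ f)(x)`, one has `‖H‖_F² ≤ ⟪G, H⟫_F ≤ ‖G‖_F²`. -/
theorem trunc_comp_differentiable_frobenius {n N : ℕ} (lam : ℝ) (hlam : 0 < lam)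
    (f : EuclideanSpace ℝ (Fin n) → EuclideanSpace ℝ (Fin N))
    (x : EuclideanSpace ℝ (Fin n))
    (hf : DifferentiableAt ℝ f x) (hne : ‖f x‖ ≠ lam) :
    DifferentiableAt ℝ (fun y => trunc lam (f y)) x ∧
    frobNorm (fderiv ℝ (fun y => trunc lam (f y)) x) ^ 2 ≤
      frobInner (fderiv ℝ f x) (fderiv ℝ (fun y => trunc lam (f y)) x) ∧
    frobInner (fderiv ℝ f x) (fderiv ℝ (fun y => trunc lam (f y)) x) ≤
      frobNorm (fderiv ℝ f x) ^ 2 := by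
  rcases lt_or_gt_of_ne hne with hlt | hgt
  · -- case ‖f x‖ < lam : trunc is the identity near x
    have hev : ∀ᶠ y in nhds x, ‖f y‖ < lam :=
      hf.continuousAt.norm.eventually_lt_const hlt
    have hEq : (fun y => trunc lam (f y)) =ᶠ[nhds x] f :=
      hev.mono fun y hy => by simp [trunc, hy.le]
    have hdiff : DifferentiableAt ℝ (fun y => trunc lam (f y)) x :=
      hf.congr_of_eventuallyEq hEq
    have hfd : fderiv ℝ (fun y => trunc lam (f y)) x = fderiv ℝ f x :=
      hEq.fderiv_eq
    refine ⟨hdiff, ?_, ?_⟩ <;> rw [hfd, frobNorm_sq]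
  · -- case lam < ‖f x‖
    set a := f x with ha_def
    set G := fderiv ℝ f x with hG_def
    have hr0 : 0 < ‖a‖ := hlam.trans hgt
    have ha : a ≠ 0 := norm_pos_iff.mp hr0
    have hnorm := hasFDerivAt_norm_aux a ha
    have hs : HasFDerivAt (fun b : EuclideanSpace ℝ (Fin N) => lam * ‖b‖⁻¹)
        (lam • ((-(‖a‖ ^ 2)⁻¹) • (‖a‖⁻¹ • innerSL ℝ a))) a := by
      have hinv := (hasDerivAt_inv hr0.ne').comp_hasFDerivAt a hnorm
      exact hinv.const_mul lam
    have hg : HasFDerivAt (fun b : EuclideanSpace ℝ (Fin N) => (lam * ‖b‖⁻¹) • b)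
        ((lam * ‖a‖⁻¹) • ContinuousLinearMap.id ℝ (EuclideanSpace ℝ (Fin N)) +
          (lam • ((-(‖a‖ ^ 2)⁻¹) • (‖a‖⁻¹ • innerSL ℝ a))).smulRight a) a :=
      hs.smul (hasFDerivAt_id a)
    set L := (lam * ‖a‖⁻¹) • ContinuousLinearMap.id ℝ (EuclideanSpace ℝ (Fin N)) +
          (lam • ((-(‖a‖ ^ 2)⁻¹) • (‖a‖⁻¹ • innerSL ℝ a))).smulRight a with hL_def
    have hev : ∀ᶠ y in nhds x, lam < ‖f y‖ :=
      hf.continuousAt.norm.eventually_const_lt hgt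
    have hEq : (fun y => trunc lam (f y)) =ᶠ[nhds x]
        (fun y => (lam * ‖f y‖⁻¹) • f y) :=
      hev.mono fun y hy => by simp [trunc, not_le.mpr hy, div_eq_mul_inv]
    have hT : HasFDerivAt (fun y => trunc lam (f y)) (L.comp G) x :=
      ((hg.comp x hf.hasFDerivAt).congr_of_eventuallyEq hEq)
    have hfd : fderiv ℝ (fun y => trunc lam (f y)) x = L.comp G := hT.fderiv
    have happ : ∀ v, (L.comp G) v =
        (lam * ‖a‖⁻¹) • (G v) + (lam * (-(‖a‖ ^ 2)⁻¹ * (‖a‖⁻¹ * ⟪a, G v⟫))) • a := by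
      intro v
      simp [hL_def, ContinuousLinearMap.smul_apply, mul_assoc]
    refine ⟨hT.differentiableAt, ?_, ?_⟩ <;> rw [hfd]
    · rw [frobNorm_sq]
      refine Finset.sum_le_sum fun i _ => ?_
      rw [happ]
      exact (key_ineq lam hlam a (G (EuclideanSpace.single i 1)) hgt).1
    · rw [frobNorm_sq]
      refine Finset.sum_le_sum fun i _ => ?_
      rw [happ]
      exact (key_ineq lam hlam a (G (EuclideanSpace.single i 1)) hgt).2
end

section
/- Let λ > 0, let f : ℝ^n → ℝ^N be differentiable at a point x with ‖f(x)‖ ≠ λ. Then the composition S_λ ∘ f is differentiable at x and, with G = Df(x) and H = D(S_λ ∘ f)(x), one has ‖H‖_F² ≤ ⟪G, H⟫_F ≤ ‖G‖_F². -/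
open RealInnerProductSpace

noncomputable def DS {N : ℕ} (lam : ℝ) (a : EuclideanSpace ℝ (Fin N)) :
    EuclideanSpace ℝ (Fin N) →L[ℝ] EuclideanSpace ℝ (Fin N) :=
  ((‖a‖ - lam) / ‖a‖) • ContinuousLinearMap.id ℝ _ +
    ((lam / ‖a‖ ^ 3) • (innerSL ℝ a)).smulRight a

lemma hasFDerivAt_shorten {N : ℕ} {lam : ℝ} (hlam : 0 < lam)
    {a : EuclideanSpace ℝ (Fin N)} (h : lam < ‖a‖) :
    HasFDerivAt (shorten lam) (DS lam a) a := by
  have hr : (0:ℝ) < ‖a‖ := hlam.trans h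
  have hr0 : ‖a‖ ≠ 0 := hr.ne'
  have hsq : HasFDerivAt (fun y : EuclideanSpace ℝ (Fin N) => ‖y‖ ^ 2)
      (2 • (innerSL ℝ a).comp (ContinuousLinearMap.id ℝ _)) a :=
    (hasFDerivAt_id a).norm_sq
  have hsqrt : HasDerivAt Real.sqrt (1 / (2 * Real.sqrt (‖a‖ ^ 2))) (‖a‖ ^ 2) :=
    Real.hasDerivAt_sqrt (by positivity)
  have hnrm : HasFDerivAt (fun y : EuclideanSpace ℝ (Fin N) => ‖y‖)
      ((1 / (2 * ‖a‖)) • (2 • (innerSL ℝ a).comp (ContinuousLinearMap.id ℝ _))) a := by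
    have h2 := hsqrt.comp_hasFDerivAt a hsq
    simp only [Function.comp_def] at h2
    have hfun : (fun y : EuclideanSpace ℝ (Fin N) => Real.sqrt (‖y‖ ^ 2)) =
        fun y => ‖y‖ := funext fun y => Real.sqrt_sq (norm_nonneg y)
    rw [hfun, Real.sqrt_sq hr.le] at h2
    exact h2
  have hinv : HasDerivAt (fun t : ℝ => t⁻¹) (-(‖a‖ ^ 2)⁻¹) ‖a‖ := hasDerivAt_inv hr0
  have hninv := hinv.comp_hasFDerivAt a hnrm
  simp only [Function.comp_def] at hninv
  have hφ := (hnrm.sub_const lam).mul hninv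
  have hg := hφ.smul (hasFDerivAt_id a)
  simp only [id] at hg
  have hev : ∀ᶠ y in nhds a, lam < ‖y‖ :=
    (continuous_norm.continuousAt (x := a)).eventually (eventually_gt_nhds h)
  have hev2 : (fun y : EuclideanSpace ℝ (Fin N) => shorten lam y) =ᶠ[nhds a]
      fun y => ((‖y‖ - lam) * (‖y‖)⁻¹) • y :=
    hev.mono fun y hy => by simp [shorten, not_le.mpr hy, div_eq_mul_inv]
  have hg := hg.congr_of_eventuallyEq hev2
  refine hg.congr_fderiv ?_
  ext v
  simp only [DS, ContinuousLinearMap.add_apply, ContinuousLinearMap.smul_apply,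
    ContinuousLinearMap.id_apply, ContinuousLinearMap.smulRight_apply,
    ContinuousLinearMap.comp_apply, innerSL_apply_apply, smul_smul, smul_eq_mul]
  simp only [PiLp.add_apply, PiLp.smul_apply, smul_eq_mul]
  simp only [nsmul_eq_mul, Pi.mul_apply]
  field_simp
  ring

lemma DS_inner_le {N : ℕ} {lam : ℝ} (hlam : 0 < lam)
    {a : EuclideanSpace ℝ (Fin N)} (h : lam < ‖a‖) (v : EuclideanSpace ℝ (Fin N)) :
    ⟪DS lam a v, DS lam a v⟫ ≤ ⟪v, DS lam a v⟫ ∧ ⟪v, DS lam a v⟫ ≤ ⟪v, v⟫ := by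
  have hr : (0:ℝ) < ‖a‖ := hlam.trans h
  have hr0 : ‖a‖ ≠ 0 := hr.ne'
  set r : ℝ := ‖a‖ with hrdef
  set c : ℝ := (r - lam) / r with hcdef
  set k : ℝ := lam / r ^ 3 with hkdef
  set t : ℝ := ⟪a, v⟫ with htdef
  have hDSv : DS lam a v = c • v + (k * t) • a := by
    simp only [DS, ContinuousLinearMap.add_apply, ContinuousLinearMap.smul_apply,
      ContinuousLinearMap.smulRight_apply, ContinuousLinearMap.id_apply, innerSL_apply_apply,
      smul_smul, smul_eq_mul, ← htdef, ← hrdef, ← hcdef, ← hkdef]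
  have hc : 0 ≤ c := div_nonneg (by linarith) hr.le
  have hk : 0 ≤ k := div_nonneg hlam.le (by positivity)
  have hkr : k * r ^ 2 = 1 - c := by
    rw [hkdef, hcdef]
    field_simp
    ring
  have hV : 0 ≤ ⟪v, v⟫ := real_inner_self_nonneg
  have hCS : t * t ≤ r ^ 2 * ⟪v, v⟫ := by
    have := real_inner_mul_inner_self_le a v
    rwa [real_inner_self_eq_norm_sq a] at this
  have haa : ⟪a, a⟫ = r ^ 2 := real_inner_self_eq_norm_sq a
  have hva : ⟪v, a⟫ = t := real_inner_comm a v
  have h1 : ⟪v, DS lam a v⟫ = c * ⟪v, v⟫ + k * t * t := by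
    rw [hDSv, inner_add_right, real_inner_smul_right, real_inner_smul_right, hva]
  have h2 : ⟪DS lam a v, DS lam a v⟫ =
      c * c * ⟪v, v⟫ + 2 * (c * (k * t)) * t + (k * t) * (k * t) * r ^ 2 := by
    rw [hDSv, inner_add_right, inner_add_left, inner_add_left, real_inner_smul_left,
      real_inner_smul_left, real_inner_smul_left, real_inner_smul_left,
      real_inner_smul_right, real_inner_smul_right, real_inner_smul_right,
      real_inner_smul_right, haa, hva, htdef]
    ring
  have hQ : k * (t * t) ≤ k * (r ^ 2 * ⟪v, v⟫) := mul_le_mul_of_nonneg_left hCS hk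
  have hE : k * (r ^ 2 * ⟪v, v⟫) = (1 - c) * ⟪v, v⟫ := by rw [← hkr]; ring
  have h3 : c * ⟪v, v⟫ + k * t * t ≤ ⟪v, v⟫ := by nlinarith [hQ, hE]
  have h4 : c * (c * ⟪v, v⟫ + k * t * t) ≤ c * ⟪v, v⟫ :=
    mul_le_mul_of_nonneg_left h3 hc
  have hB : k * t * (k * t) * r ^ 2 = k * t * t * (1 - c) := by rw [← hkr]; ring
  constructor
  · rw [h1, h2]
    nlinarith [h4, hB]
  · rw [h1]; exact h3

/-- Let `λ > 0` and let `f : ℝ^n → ℝ^N` be differentiable at `x` with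
`‖f x‖ ≠ λ`. Then `S_λ ∘ f` is differentiable at `x` and, with `G = Df(x)` and
`H = D(S_λ ∘ f)(x)`, one has `‖H‖_F² ≤ ⟪G, H⟫_F ≤ ‖G‖_F²`. -/
theorem shorten_comp_differentiable_frobenius {n N : ℕ} (lam : ℝ) (hlam : 0 < lam)
    (f : EuclideanSpace ℝ (Fin n) → EuclideanSpace ℝ (Fin N))
    (x : EuclideanSpace ℝ (Fin n))
    (hf : DifferentiableAt ℝ f x) (hne : ‖f x‖ ≠ lam) :
    DifferentiableAt ℝ (fun y => shorten lam (f y)) x ∧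
    frobNorm (fderiv ℝ (fun y => shorten lam (f y)) x) ^ 2 ≤
      frobInner (fderiv ℝ f x) (fderiv ℝ (fun y => shorten lam (f y)) x) ∧
    frobInner (fderiv ℝ f x) (fderiv ℝ (fun y => shorten lam (f y)) x) ≤
      frobNorm (fderiv ℝ f x) ^ 2 := by
  rcases hne.lt_or_gt with hlt | hgt
  · -- ‖f x‖ < lam : locally zero
    have hev : ∀ᶠ y in nhds x, ‖f y‖ < lam :=
      ((continuous_norm.continuousAt).comp hf.continuousAt).eventually
        (eventually_lt_nhds hlt)
    have hev2 : (fun y => shorten lam (f y)) =ᶠ[nhds x]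
        fun _ => (0 : EuclideanSpace ℝ (Fin N)) :=
      hev.mono fun y hy => by simp [shorten, hy.le]
    have hdiff : DifferentiableAt ℝ (fun y => shorten lam (f y)) x :=
      (differentiableAt_const _).congr_of_eventuallyEq hev2
    have hfd : fderiv ℝ (fun y => shorten lam (f y)) x = 0 := by
      rw [hev2.fderiv_eq]
      exact fderiv_const_apply _
    refine ⟨hdiff, ?_, ?_⟩
    · simp [hfd, frobNorm, frobInner]
    · rw [hfd, frobNorm_sq]
      simp only [frobInner, ContinuousLinearMap.zero_apply, inner_zero_right]
      rw [Finset.sum_const_zero]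
      exact frobInner_self_nonneg _
  · -- lam < ‖f x‖
    set G := fderiv ℝ f x with hG
    have hH : HasFDerivAt (fun y => shorten lam (f y))
        ((DS lam (f x)).comp G) x :=
      (hasFDerivAt_shorten hlam hgt).comp x hf.hasFDerivAt
    have hfd : fderiv ℝ (fun y => shorten lam (f y)) x = (DS lam (f x)).comp G :=
      hH.fderiv
    refine ⟨hH.differentiableAt, ?_, ?_⟩
    · rw [hfd, frobNorm_sq]
      refine Finset.sum_le_sum fun i _ => ?_
      simpa using (DS_inner_le hlam hgt (G (EuclideanSpace.single i 1))).1
    · rw [hfd, frobNorm_sq]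
      refine Finset.sum_le_sum fun i _ => ?_
      simpa using (DS_inner_le hlam hgt (G (EuclideanSpace.single i 1))).2
end

section
/- Let λ > 0, let f : ℝ^n → ℝ^N be differentiable at a point x with ‖f(x)‖ > λ. Then, with G = Df(x) and H = D(S_λ ∘ f)(x), one has ⟪G, H⟫_F ≥ ((‖f(x)‖ − λ)/‖f(x)‖) ‖G‖_F², i.e. ⟪G, H⟫_F ≥ (‖S_λ f(x)‖/‖f(x)‖) ‖G‖_F². -/
open RealInnerProductSpace

/-- Let `λ > 0` and let `f : ℝ^n → ℝ^N` be differentiable at `x` with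
`‖f x‖ > λ`. Then, with `G = Df(x)` and `H = D(S_λ ∘ f)(x)`, one has
`⟪G, H⟫_F ≥ ((‖f x‖ − λ)/‖f x‖) ‖G‖_F²`, i.e. `⟪G, H⟫_F ≥ (‖S_λ f(x)‖/‖f x‖) ‖G‖_F²`. -/
theorem shorten_comp_frobenius_lower_bound {n N : ℕ} (lam : ℝ) (hlam : 0 < lam)
    (f : EuclideanSpace ℝ (Fin n) → EuclideanSpace ℝ (Fin N))
    (x : EuclideanSpace ℝ (Fin n))
    (hf : DifferentiableAt ℝ f x) (hgt : lam < ‖f x‖) :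
    frobInner (fderiv ℝ f x) (fderiv ℝ (fun y => shorten lam (f y)) x) ≥
      ((‖f x‖ - lam) / ‖f x‖) * frobNorm (fderiv ℝ f x) ^ 2 ∧
    frobInner (fderiv ℝ f x) (fderiv ℝ (fun y => shorten lam (f y)) x) ≥
      (‖shorten lam (f x)‖ / ‖f x‖) * frobNorm (fderiv ℝ f x) ^ 2 := by
  set a := f x with ha
  set G := fderiv ℝ f x with hGdef
  have hr : (0:ℝ) < ‖a‖ := hlam.trans hgt
  have hrne : ‖a‖ ≠ 0 := ne_of_gt hr
  have hF : HasFDerivAt f G x := hf.hasFDerivAt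
  -- derivative of the inner product
  have hφ : HasFDerivAt (fun y => ⟪f y, f y⟫)
      ((fderivInnerCLM ℝ (a, a)).comp (G.prod G)) x := hF.inner ℝ hF
  have hφx : ⟪a, a⟫ ≠ 0 := by
    rw [real_inner_self_eq_norm_sq]; positivity
  -- derivative of the norm
  have hneq : (fun y => ‖f y‖) = fun y => Real.sqrt ⟪f y, f y⟫ := by
    funext y
    rw [real_inner_self_eq_norm_sq, Real.sqrt_sq (norm_nonneg _)]
  have hsq : Real.sqrt ⟪a, a⟫ = ‖a‖ := by
    rw [real_inner_self_eq_norm_sq, Real.sqrt_sq (norm_nonneg _)]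
  have hn : HasFDerivAt (fun y => ‖f y‖)
      ((1 / (2 * ‖a‖)) • ((fderivInnerCLM ℝ (a, a)).comp (G.prod G))) x := by
    rw [hneq]
    have := hφ.sqrt hφx
    rwa [hsq] at this
  have hinv : HasFDerivAt (fun y => ‖f y‖⁻¹)
      ((-(‖a‖ ^ 2)⁻¹) • ((1 / (2 * ‖a‖)) • ((fderivInnerCLM ℝ (a, a)).comp (G.prod G)))) x :=
    (hasDerivAt_inv hrne).comp_hasFDerivAt x hn
  set Φ : EuclideanSpace ℝ (Fin n) →L[ℝ] ℝ :=
    (-(‖a‖ ^ 2)⁻¹) • ((1 / (2 * ‖a‖)) • ((fderivInnerCLM ℝ (a, a)).comp (G.prod G))) with hΦ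
  have hc : HasFDerivAt (fun y => 1 - lam * ‖f y‖⁻¹) (-(lam • Φ)) x :=
    (hinv.const_mul lam).const_sub 1
  set H : EuclideanSpace ℝ (Fin n) →L[ℝ] EuclideanSpace ℝ (Fin N) :=
    (1 - lam * ‖a‖⁻¹) • G + (-(lam • Φ)).smulRight a with hH
  have hg : HasFDerivAt (fun y => (1 - lam * ‖f y‖⁻¹) • f y) H x := hc.smul hF
  -- the composite agrees with the smooth formula near x
  have hev : ∀ᶠ y in nhds x, lam < ‖f y‖ :=
    (hf.continuousAt.norm).eventually (eventually_gt_nhds hgt)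
  have heq : (fun y => shorten lam (f y)) =ᶠ[nhds x]
      (fun y => (1 - lam * ‖f y‖⁻¹) • f y) := by
    filter_upwards [hev] with y hy
    have hyne : ‖f y‖ ≠ 0 := ne_of_gt (hlam.trans hy)
    rw [shorten, if_neg (not_le.2 hy)]
    congr 1
    field_simp
  have hfd : fderiv ℝ (fun y => shorten lam (f y)) x = H := by
    rw [heq.fderiv_eq, hg.fderiv]
  rw [hfd]
  -- pointwise bound
  have key : ∀ v : EuclideanSpace ℝ (Fin n),
      ⟪G v, H v⟫ ≥ ((‖a‖ - lam) / ‖a‖) * ‖G v‖ ^ 2 := by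
    intro v
    have hHv : H v = (1 - lam * ‖a‖⁻¹) • G v + (-(lam * Φ v)) • a := by
      simp [hH, ContinuousLinearMap.smulRight_apply]
    rw [hHv, inner_add_right, real_inner_smul_right, real_inner_smul_right,
      real_inner_self_eq_norm_sq]
    have hsymm : ⟪G v, a⟫ = ⟪a, G v⟫ := real_inner_comm _ _
    have hΦv' : Φ v = -((‖a‖ ^ 2)⁻¹ * ((1 / (2 * ‖a‖)) * (2 * ⟪a, G v⟫))) := by
      simp only [hΦ, ContinuousLinearMap.smul_apply, ContinuousLinearMap.coe_comp',
        Function.comp_apply, ContinuousLinearMap.prod_apply, fderivInnerCLM_apply,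
        smul_eq_mul]
      rw [hsymm]; ring
    rw [hΦv', hsymm]
    have h1 : (1 - lam * ‖a‖⁻¹) = (‖a‖ - lam) / ‖a‖ := by field_simp
    have h2 : -(lam * -((‖a‖ ^ 2)⁻¹ * (1 / (2 * ‖a‖) * (2 * ⟪a, G v⟫)))) * ⟪a, G v⟫
        = lam * ⟪a, G v⟫ ^ 2 / ‖a‖ ^ 3 := by
      field_simp
    rw [h1, h2]
    have h3 : 0 ≤ lam * ⟪a, G v⟫ ^ 2 / ‖a‖ ^ 3 := by positivity
    linarith [h3]
  -- sum up
  have hfrobG : frobInner G G = ∑ i : Fin n, ‖G (EuclideanSpace.single i 1)‖ ^ 2 := by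
    unfold frobInner
    exact Finset.sum_congr rfl fun i _ => real_inner_self_eq_norm_sq _
  have hfrobGnn : 0 ≤ frobInner G G := by
    rw [hfrobG]
    exact Finset.sum_nonneg fun i _ => sq_nonneg _
  have hfrobNorm : frobNorm G ^ 2 = frobInner G G := Real.sq_sqrt hfrobGnn
  have hmain : frobInner G H ≥ ((‖a‖ - lam) / ‖a‖) * frobNorm G ^ 2 := by
    rw [hfrobNorm, hfrobG, Finset.mul_sum]
    unfold frobInner
    exact Finset.sum_le_sum fun i _ => key _
  refine ⟨hmain, ?_⟩
  have hnorm : ‖shorten lam a‖ = ‖a‖ - lam := by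
    rw [shorten, if_neg (not_le.2 hgt), norm_smul, Real.norm_eq_abs,
      abs_of_pos (div_pos (sub_pos.2 hgt) hr), div_mul_cancel₀ _ hrne]
  rw [hnorm]
  exact hmain
end

section
/- Let λ > 0, let f : ℝ^n → ℝ^N be differentiable at a point x with ‖f(x)‖ > λ. Then, with G = Df(x) and H = D(S_λ ∘ f)(x), one has ((‖f(x)‖ − λ)/‖f(x)‖) ‖G‖_F ≤ ‖H‖_F ≤ ‖G‖_F. -/
open RealInnerProductSpace

lemma shorten_aux_real (lam r s U : ℝ) (hlam : 0 < lam) (hgt : lam < r)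
    (hU : 0 ≤ U) (hCS : s ^ 2 ≤ r ^ 2 * U) :
    (1 - lam / r) ^ 2 * U ≤
      (1 - lam / r) ^ 2 * U + 2 * ((1 - lam / r) * ((lam / r ^ 3) * s) * s)
        + ((lam / r ^ 3) * s) ^ 2 * r ^ 2 ∧
    (1 - lam / r) ^ 2 * U + 2 * ((1 - lam / r) * ((lam / r ^ 3) * s) * s)
        + ((lam / r ^ 3) * s) ^ 2 * r ^ 2 ≤ U := by
  have hr0 : 0 < r := lt_trans hlam hgt
  have h1 : 0 < 2 * r - lam := by linarith
  have hid1 : 2 * ((1 - lam / r) * ((lam / r ^ 3) * s) * s)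
        + ((lam / r ^ 3) * s) ^ 2 * r ^ 2 = lam * (2 * r - lam) / r ^ 4 * s ^ 2 := by
    field_simp
    ring
  have hpos : 0 ≤ lam * (2 * r - lam) / r ^ 4 := by positivity
  constructor
  · nlinarith [mul_nonneg hpos (sq_nonneg s)]
  · have h3 : (1 - lam / r) ^ 2 * U + lam * (2 * r - lam) / r ^ 4 * (r ^ 2 * U) = U := by
      field_simp
      ring
    nlinarith [mul_le_mul_of_nonneg_left hCS hpos]

lemma shorten_aux_key {N : ℕ} (lam : ℝ) (hlam : 0 < lam)
    (w u : EuclideanSpace ℝ (Fin N)) (hgt : lam < ‖w‖) :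
    (1 - lam / ‖w‖) ^ 2 * ‖u‖ ^ 2 ≤
      ‖(1 - lam / ‖w‖) • u + ((lam / ‖w‖ ^ 3) * ⟪w, u⟫) • w‖ ^ 2 ∧
    ‖(1 - lam / ‖w‖) • u + ((lam / ‖w‖ ^ 3) * ⟪w, u⟫) • w‖ ^ 2 ≤ ‖u‖ ^ 2 := by
  have hexp : ‖(1 - lam / ‖w‖) • u + ((lam / ‖w‖ ^ 3) * ⟪w, u⟫) • w‖ ^ 2 =
      (1 - lam / ‖w‖) ^ 2 * ‖u‖ ^ 2
        + 2 * ((1 - lam / ‖w‖) * ((lam / ‖w‖ ^ 3) * ⟪w, u⟫) * ⟪w, u⟫)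
        + ((lam / ‖w‖ ^ 3) * ⟪w, u⟫) ^ 2 * ‖w‖ ^ 2 := by
    rw [norm_add_sq_real, norm_smul, norm_smul, real_inner_smul_left,
      real_inner_smul_right, real_inner_comm u w]
    simp only [mul_pow, sq_abs, Real.norm_eq_abs]
    ring
  have hCS : ⟪w, u⟫ ^ 2 ≤ ‖w‖ ^ 2 * ‖u‖ ^ 2 := by
    have h := abs_real_inner_le_norm w u
    nlinarith [abs_nonneg (⟪w, u⟫ : ℝ), sq_abs (⟪w, u⟫ : ℝ)]
  rw [hexp]
  exact shorten_aux_real lam ‖w‖ ⟪w, u⟫ (‖u‖ ^ 2) hlam hgt (sq_nonneg _) hCS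


lemma shorten_deriv {n N : ℕ} (lam : ℝ) (hlam : 0 < lam)
    (f : EuclideanSpace ℝ (Fin n) → EuclideanSpace ℝ (Fin N))
    (x : EuclideanSpace ℝ (Fin n))
    (hf : DifferentiableAt ℝ f x) (hgt : lam < ‖f x‖) :
    ∀ v, fderiv ℝ (fun y => (if ‖f y‖ ≤ lam then (0 : EuclideanSpace ℝ (Fin N)) else ((‖f y‖ - lam) / ‖f y‖) • f y)) x v
      = (1 - lam / ‖f x‖) • (fderiv ℝ f x v)
        + ((lam / ‖f x‖ ^ 3) * ⟪f x, fderiv ℝ f x v⟫) • f x := by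
  have hr0 : 0 < ‖f x‖ := lt_trans hlam hgt
  have hG := hf.hasFDerivAt
  set G := fderiv ℝ f x with hGdef
  -- derivative of the norm
  have h1 : HasFDerivAt (fun y => Real.sqrt (‖f y‖ ^ 2))
      ((1 / (2 * Real.sqrt (‖f x‖ ^ 2))) • (2 • (innerSL ℝ (f x)).comp G)) x :=
    hG.norm_sq.sqrt (by positivity)
  have hfn : (fun y => Real.sqrt (‖f y‖ ^ 2)) = fun y => ‖f y‖ :=
    funext fun y => Real.sqrt_sq (norm_nonneg _)
  rw [hfn] at h1
  -- derivative of inverse norm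
  have h2 : HasFDerivAt (fun y => (‖f y‖)⁻¹)
      ((-(‖f x‖ ^ 2)⁻¹) • ((1 / (2 * Real.sqrt (‖f x‖ ^ 2))) • (2 • (innerSL ℝ (f x)).comp G))) x :=
    (hasDerivAt_inv hr0.ne').comp_hasFDerivAt x h1
  -- derivative of the scalar factor
  have h3 : HasFDerivAt (fun y => 1 - lam * (‖f y‖)⁻¹)
      (-(lam • ((-(‖f x‖ ^ 2)⁻¹) • ((1 / (2 * Real.sqrt (‖f x‖ ^ 2))) • (2 • (innerSL ℝ (f x)).comp G))))) x :=
    (h2.const_mul lam).const_sub 1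
  have hD := h3.smul hG
  -- eventual equality with shorten
  have hev : (fun y => (if ‖f y‖ ≤ lam then (0 : EuclideanSpace ℝ (Fin N)) else ((‖f y‖ - lam) / ‖f y‖) • f y))
      =ᶠ[nhds x] (fun y => (1 - lam * (‖f y‖)⁻¹) • f y) := by
    have hev0 : ∀ᶠ y in nhds x, lam < ‖f y‖ :=
      hf.continuousAt.norm.eventually (eventually_gt_nhds hgt)
    filter_upwards [hev0] with y hy
    have hy0 : (0:ℝ) < ‖f y‖ := lt_trans hlam hy
    rw [if_neg (not_le.2 hy)]
    congr 1
    field_simp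
  have hD' := hD.congr_of_eventuallyEq hev
  have hfd := hD'.fderiv
  intro v
  rw [hfd]
  simp only [ContinuousLinearMap.add_apply, ContinuousLinearMap.coe_smul',
    Pi.smul_apply, ContinuousLinearMap.smulRight_apply, ContinuousLinearMap.neg_apply,
    ContinuousLinearMap.comp_apply, innerSL_apply_apply,
    Pi.neg_apply, smul_eq_mul]
  rw [Real.sqrt_sq (norm_nonneg _)]
  congr 1
  all_goals (congr 1; field_simp; try ring)

/-- Let `λ > 0` and let `f : ℝ^n → ℝ^N` be differentiable at `x` with
`‖f x‖ > λ`. Then, with `G = Df(x)` and `H = D(S_λ ∘ f)(x)`, one has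
`((‖f x‖ − λ)/‖f x‖) ‖G‖_F ≤ ‖H‖_F ≤ ‖G‖_F`. -/
theorem shorten_comp_frobenius_norm_bounds {n N : ℕ} (lam : ℝ) (hlam : 0 < lam)
    (f : EuclideanSpace ℝ (Fin n) → EuclideanSpace ℝ (Fin N))
    (x : EuclideanSpace ℝ (Fin n))
    (hf : DifferentiableAt ℝ f x) (hgt : lam < ‖f x‖) :
    ((‖f x‖ - lam) / ‖f x‖) * frobNorm (fderiv ℝ f x) ≤
      frobNorm (fderiv ℝ (fun y => shorten lam (f y)) x) ∧
    frobNorm (fderiv ℝ (fun y => shorten lam (f y)) x) ≤ frobNorm (fderiv ℝ f x) := by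
  have hr0 : (0:ℝ) < ‖f x‖ := lt_trans hlam hgt
  have hsh : (fun y => shorten lam (f y))
      = (fun y => (if ‖f y‖ ≤ lam then (0 : EuclideanSpace ℝ (Fin N))
          else ((‖f y‖ - lam) / ‖f y‖) • f y)) := rfl
  have hval := shorten_deriv lam hlam f x hf hgt
  rw [hsh]
  set G := fderiv ℝ f x with hG
  set H := fderiv ℝ (fun y => (if ‖f y‖ ≤ lam then (0 : EuclideanSpace ℝ (Fin N))
          else ((‖f y‖ - lam) / ‖f y‖) • f y)) x with hH
  have hbd : ∀ i : Fin n,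
      (1 - lam / ‖f x‖) ^ 2 * ‖G (EuclideanSpace.single i 1)‖ ^ 2
        ≤ ‖H (EuclideanSpace.single i 1)‖ ^ 2 ∧
      ‖H (EuclideanSpace.single i 1)‖ ^ 2 ≤ ‖G (EuclideanSpace.single i 1)‖ ^ 2 := by
    intro i
    rw [hval (EuclideanSpace.single i 1)]
    exact shorten_aux_key lam hlam (f x) (G (EuclideanSpace.single i 1)) hgt
  have hfr : ∀ (A : EuclideanSpace ℝ (Fin n) →L[ℝ] EuclideanSpace ℝ (Fin N)),
      frobInner A A = ∑ i : Fin n, ‖A (EuclideanSpace.single i 1)‖ ^ 2 := by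
    intro A
    unfold frobInner
    simp_rw [real_inner_self_eq_norm_sq]
  have hα : (0:ℝ) ≤ (‖f x‖ - lam) / ‖f x‖ := by
    apply div_nonneg (by linarith) hr0.le
  have hαeq : (‖f x‖ - lam) / ‖f x‖ = 1 - lam / ‖f x‖ := by field_simp
  constructor
  · have hkey : ((‖f x‖ - lam) / ‖f x‖) ^ 2 * frobInner G G ≤ frobInner H H := by
      rw [hfr, hfr, Finset.mul_sum]
      apply Finset.sum_le_sum
      intro i _
      rw [hαeq]
      exact (hbd i).1
    have hrw : ((‖f x‖ - lam) / ‖f x‖) * frobNorm G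
        = Real.sqrt (((‖f x‖ - lam) / ‖f x‖) ^ 2 * frobInner G G) := by
      rw [Real.sqrt_mul (sq_nonneg _), Real.sqrt_sq hα]
      rfl
    rw [hrw]
    exact Real.sqrt_le_sqrt hkey
  · apply Real.sqrt_le_sqrt
    rw [hfr, hfr]
    exact Finset.sum_le_sum fun i _ => (hbd i).2
end

section
/- Let φ' : [0,∞) → [0,∞) be nondecreasing and define A : ℝ^N \ {0} → ℝ^N by A(a) = φ'(‖a‖) a/‖a‖. Then for all nonzero P, Q ∈ ℝ^N one has ⟨A(P) − A(Q), P − Q⟩ ≥ 0. -/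
open RealInnerProductSpace

/-- Let `φ' : [0,∞) → [0,∞)` be nondecreasing and define
`A(a) = φ'(‖a‖) a/‖a‖` for nonzero `a ∈ ℝ^N`. Then for all nonzero `P, Q ∈ ℝ^N`,
`⟨A(P) − A(Q), P − Q⟩ ≥ 0`. -/
theorem monotone_vector_field_inner_nonneg {N : ℕ} (φ' : ℝ → ℝ)
    (hφ'_nonneg : ∀ t, 0 ≤ t → 0 ≤ φ' t)
    (hφ'_mono : ∀ s t, 0 ≤ s → s ≤ t → φ' s ≤ φ' t)
    (A : EuclideanSpace ℝ (Fin N) → EuclideanSpace ℝ (Fin N))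
    (hA : ∀ a : EuclideanSpace ℝ (Fin N), a ≠ 0 → A a = (φ' ‖a‖ / ‖a‖) • a)
    (P Q : EuclideanSpace ℝ (Fin N)) (hP : P ≠ 0) (hQ : Q ≠ 0) :
    0 ≤ ⟪A P - A Q, P - Q⟫ := by
  have hPn : (0:ℝ) < ‖P‖ := norm_pos_iff.mpr hP
  have hQn : (0:ℝ) < ‖Q‖ := norm_pos_iff.mpr hQ
  have hfP : 0 ≤ φ' ‖P‖ := hφ'_nonneg _ hPn.le
  have hfQ : 0 ≤ φ' ‖Q‖ := hφ'_nonneg _ hQn.le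
  rw [hA P hP, hA Q hQ]
  rw [inner_sub_left, inner_sub_right, inner_sub_right, real_inner_smul_left,
    real_inner_smul_left, real_inner_smul_left, real_inner_smul_left,
    real_inner_self_eq_norm_sq, real_inner_self_eq_norm_sq]
  have hPQ : ⟪P, Q⟫ ≤ ‖P‖ * ‖Q‖ := real_inner_le_norm P Q
  have hQP : ⟪Q, P⟫ ≤ ‖P‖ * ‖Q‖ := by
    rw [real_inner_comm]; exact hPQ
  have h1 : φ' ‖P‖ / ‖P‖ * ⟪P, Q⟫ ≤ φ' ‖P‖ * ‖Q‖ := by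
    calc φ' ‖P‖ / ‖P‖ * ⟪P, Q⟫ ≤ φ' ‖P‖ / ‖P‖ * (‖P‖ * ‖Q‖) := by
          apply mul_le_mul_of_nonneg_left hPQ (div_nonneg hfP hPn.le)
      _ = φ' ‖P‖ * ‖Q‖ := by field_simp
  have h2 : φ' ‖Q‖ / ‖Q‖ * ⟪Q, P⟫ ≤ φ' ‖Q‖ * ‖P‖ := by
    calc φ' ‖Q‖ / ‖Q‖ * ⟪Q, P⟫ ≤ φ' ‖Q‖ / ‖Q‖ * (‖P‖ * ‖Q‖) := by
          apply mul_le_mul_of_nonneg_left hQP (div_nonneg hfQ hQn.le)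
      _ = φ' ‖Q‖ * ‖P‖ := by field_simp
  have h3 : φ' ‖P‖ / ‖P‖ * ‖P‖ ^ 2 = φ' ‖P‖ * ‖P‖ := by field_simp
  have h4 : φ' ‖Q‖ / ‖Q‖ * ‖Q‖ ^ 2 = φ' ‖Q‖ * ‖Q‖ := by field_simp
  have key : 0 ≤ (φ' ‖P‖ - φ' ‖Q‖) * (‖P‖ - ‖Q‖) := by
    rcases le_total ‖P‖ ‖Q‖ with h | h
    · nlinarith [hφ'_mono _ _ hPn.le h]
    · nlinarith [hφ'_mono _ _ hQn.le h]
  nlinarith [h1, h2, h3, h4, key]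
end

section
/- Let φ be an N-function with right derivative φ' and conjugate N-function φ*, and suppose 1 < p ≤ q < ∞ are such that p ≤ φ'(t)t/φ(t) ≤ q for all t > 0. Then for all s ≥ 0 one has 2^{−p/(p−1)} φ(s) ≤ φ*(φ'(s)) ≤ 2^q φ(s). -/
open Filter Set intervalIntegral

/-- An N-function together with its right derivative `φ'`: `φ : [0,∞) → [0,∞)` is convex,
left-continuous, `φ(0) = 0`, `φ(t)/t → 0` as `t → 0⁺` and `φ(t)/t → ∞` as `t → ∞`;
`φ'` is its nondecreasing nonnegative right derivative with `φ(t) = ∫₀ᵗ φ'(s) ds`. -/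
structure IsNFunction (φ φ' : ℝ → ℝ) : Prop where
  nonneg : ∀ t, 0 ≤ t → 0 ≤ φ t
  convexOn : ConvexOn ℝ (Set.Ici (0 : ℝ)) φ
  leftContinuous : ∀ t : ℝ, 0 < t → ContinuousWithinAt φ (Set.Iic t) t
  map_zero : φ 0 = 0
  tendsto_zero : Filter.Tendsto (fun t => φ t / t) (nhdsWithin 0 (Set.Ioi 0)) (nhds 0)
  tendsto_atTop : Filter.Tendsto (fun t => φ t / t) Filter.atTop Filter.atTop
  deriv_nonneg : ∀ t, 0 ≤ t → 0 ≤ φ' t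
  deriv_mono : ∀ s t, 0 ≤ s → s ≤ t → φ' s ≤ φ' t
  eq_integral : ∀ t : ℝ, 0 < t → φ t = ∫ s in (0 : ℝ)..t, φ' s

/-- The conjugate N-function `φ*(s) = sup_{t ≥ 0} (s t − φ(t))`. -/
noncomputable def conjNFunction (φ : ℝ → ℝ) (s : ℝ) : ℝ :=
  sSup ((fun t => s * t - φ t) '' Set.Ici (0 : ℝ))

lemma NF.intInt {φ φ' : ℝ → ℝ} (hφ : IsNFunction φ φ') {a b : ℝ} (ha : 0 ≤ a) (hab : a ≤ b) :
    IntervalIntegrable φ' MeasureTheory.volume a b := by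
  apply MonotoneOn.intervalIntegrable
  intro x hx y hy hxy
  rw [Set.uIcc_of_le hab] at hx hy
  exact hφ.deriv_mono x y (le_trans ha hx.1) hxy

lemma NF.repr {φ φ' : ℝ → ℝ} (hφ : IsNFunction φ φ') {b : ℝ} (hb : 0 ≤ b) :
    φ b = ∫ s in (0:ℝ)..b, φ' s := by
  rcases hb.eq_or_lt with h | h
  · simp [← h, hφ.map_zero]
  · exact hφ.eq_integral b h

lemma NF.key {φ φ' : ℝ → ℝ} (hφ : IsNFunction φ φ') {s t : ℝ} (hs : 0 ≤ s) (hst : s ≤ t) :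
    φ' s * (t - s) ≤ φ t - φ s ∧ φ t - φ s ≤ φ' t * (t - s) := by
  have ht : 0 ≤ t := hs.trans hst
  have h1 : φ t - φ s = ∫ x in s..t, φ' x := by
    rw [NF.repr hφ ht, NF.repr hφ hs,
      intervalIntegral.integral_interval_sub_left (NF.intInt hφ le_rfl ht) (NF.intInt hφ le_rfl hs)]
  have hi := NF.intInt hφ hs hst
  constructor
  · rw [h1]
    have := intervalIntegral.integral_mono_on hst (_root_.intervalIntegrable_const (c := φ' s)) hi
      (fun x hx => hφ.deriv_mono s x hs hx.1)
    simpa [mul_comm] using this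
  · rw [h1]
    have := intervalIntegral.integral_mono_on hst hi (_root_.intervalIntegrable_const (c := φ' t))
      (fun x hx => hφ.deriv_mono x t (hs.trans hx.1) hx.2)
    simpa [mul_comm] using this

lemma NF.conj_eq {φ φ' : ℝ → ℝ} (hφ : IsNFunction φ φ') {s : ℝ} (hs : 0 ≤ s) :
    conjNFunction φ (φ' s) = φ' s * s - φ s := by
  apply IsGreatest.csSup_eq
  constructor
  · exact ⟨s, hs, rfl⟩
  · rintro x ⟨t, ht, rfl⟩
    have ht : (0:ℝ) ≤ t := ht
    rcases le_total t s with h | h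
    · have := (NF.key hφ ht h).2
      show φ' s * t - φ t ≤ φ' s * s - φ s
      nlinarith
    · have := (NF.key hφ hs h).1
      show φ' s * t - φ t ≤ φ' s * s - φ s
      nlinarith

lemma exp_ge_mul (y : ℝ) : Real.exp 1 * y ≤ Real.exp y := by
  have h := Real.add_one_le_exp (y - 1)
  have h2 : Real.exp 1 * y ≤ Real.exp 1 * Real.exp (y - 1) :=
    mul_le_mul_of_nonneg_left (by linarith) (Real.exp_pos 1).le
  calc Real.exp 1 * y ≤ Real.exp 1 * Real.exp (y - 1) := h2
    _ = Real.exp y := by rw [← Real.exp_add]; ring_nf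

lemma const_lower {p : ℝ} (hp : 1 < p) : (2 : ℝ) ^ (-(p / (p - 1))) ≤ p - 1 := by
  have hp1 : 0 < p - 1 := by linarith
  have hx : 0 < p / (p - 1) := div_pos (by linarith) hp1
  have hlog : (0.6931471803 : ℝ) < Real.log 2 := Real.log_two_gt_d9
  have he : (2 : ℝ) ≤ Real.exp 1 := by
    have := Real.add_one_le_exp (1 : ℝ); linarith
  have h2x : Real.exp 1 * (p / (p - 1) * Real.log 2) ≤ (2:ℝ) ^ (p / (p - 1)) := by
    rw [Real.rpow_def_of_pos (by norm_num)]
    have := exp_ge_mul (Real.log 2 * (p / (p - 1)))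
    calc Real.exp 1 * (p / (p - 1) * Real.log 2)
        = Real.exp 1 * (Real.log 2 * (p / (p - 1))) := by ring
      _ ≤ Real.exp (Real.log 2 * (p / (p - 1))) := this
  have hpos : (0:ℝ) < (2:ℝ) ^ (p / (p - 1)) := Real.rpow_pos_of_pos (by norm_num) _
  rw [Real.rpow_neg (by norm_num)]
  rw [inv_le_comm₀ hpos hp1]
  have heq : Real.exp 1 * (p / (p - 1) * Real.log 2) = Real.exp 1 * p * Real.log 2 / (p - 1) := by
    field_simp
  have h1 : (p - 1)⁻¹ ≤ Real.exp 1 * (p / (p - 1) * Real.log 2) := by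
    rw [heq, inv_eq_one_div, div_le_div_iff_of_pos_right hp1]
    have hlog0 : (0:ℝ) ≤ Real.log 2 := by linarith
    have hep : (2:ℝ) ≤ Real.exp 1 * p := by nlinarith
    nlinarith [mul_le_mul_of_nonneg_right hep hlog0]
  linarith

lemma const_upper {q : ℝ} (hq : 1 < q) : q - 1 ≤ (2 : ℝ) ^ q := by
  have hlog : (0.6931471803 : ℝ) < Real.log 2 := Real.log_two_gt_d9
  have he : (2 : ℝ) ≤ Real.exp 1 := by
    have := Real.add_one_le_exp (1 : ℝ); linarith
  have h2x : Real.exp 1 * (Real.log 2 * q) ≤ (2:ℝ) ^ q := by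
    rw [Real.rpow_def_of_pos (by norm_num)]
    exact exp_ge_mul (Real.log 2 * q)
  have h1 : (1:ℝ) ≤ Real.exp 1 * Real.log 2 := by nlinarith
  have hq0 : (0:ℝ) ≤ q := by linarith
  nlinarith [mul_le_mul_of_nonneg_right h1 hq0]


/-- If `φ` is an N-function with Simonenko indices `p ≤ q`
(`1 < p ≤ q < ∞`, `p ≤ φ'(t)t/φ(t) ≤ q` for all `t > 0`), then for all `s ≥ 0`,
`2^{−p/(p−1)} φ(s) ≤ φ*(φ'(s)) ≤ 2^q φ(s)`. -/
theorem nfunction_conj_of_deriv (φ φ' : ℝ → ℝ) (hφ : IsNFunction φ φ')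
    (p q : ℝ) (hp : 1 < p) (hpq : p ≤ q)
    (hSim : ∀ t : ℝ, 0 < t → p ≤ φ' t * t / φ t ∧ φ' t * t / φ t ≤ q) :
    ∀ s : ℝ, 0 ≤ s →
      (2 : ℝ) ^ (-(p / (p - 1))) * φ s ≤ conjNFunction φ (φ' s) ∧
      conjNFunction φ (φ' s) ≤ (2 : ℝ) ^ q * φ s := by
  intro s hs
  rcases hs.eq_or_lt with h | h
  · rw [← h]
    simp [NF.conj_eq hφ le_rfl, hφ.map_zero]
  · have hconj := NF.conj_eq hφ hs
    have hφ0 : 0 ≤ φ s := hφ.nonneg s hs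
    have hne : φ s ≠ 0 := by
      intro h0
      have := (hSim s h).1
      rw [h0, div_zero] at this
      linarith
    have hφpos : 0 < φ s := lt_of_le_of_ne hφ0 (Ne.symm hne)
    have h1 : p * φ s ≤ φ' s * s := (le_div_iff₀ hφpos).mp (hSim s h).1
    have h2 : φ' s * s ≤ q * φ s := (div_le_iff₀ hφpos).mp (hSim s h).2
    rw [hconj]
    constructor
    · nlinarith [mul_le_mul_of_nonneg_right (const_lower hp) hφ0]
    · nlinarith [mul_le_mul_of_nonneg_right (const_upper (lt_of_lt_of_le hp hpq)) hφ0]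
end

section
/- Let φ be an N-function with right derivative φ', and suppose 1 < p ≤ q < ∞ are such that p ≤ φ'(t)t/φ(t) ≤ q for all t > 0. Then for every ε > 0 there exists a constant C_ε > 0, depending only on ε, p and q, such that φ'(s) t ≤ C_ε φ(s) + ε φ(t) for all s, t ≥ 0. -/
open Filter Set intervalIntegral

/-- If `φ` is an N-function with Simonenko indices `p ≤ q`
(`1 < p ≤ q < ∞`, `p ≤ φ'(t)t/φ(t) ≤ q` for all `t > 0`), then for every `ε > 0` there is
a constant `C_ε > 0`, depending only on `ε`, `p` and `q`, such that
`φ'(s) t ≤ C_ε φ(s) + ε φ(t)` for all `s, t ≥ 0`. -/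
theorem nfunction_young_with_deriv (p q : ℝ) (hp : 1 < p) (hpq : p ≤ q) :
    ∀ ε : ℝ, 0 < ε → ∃ C : ℝ, 0 < C ∧
      ∀ φ φ' : ℝ → ℝ, IsNFunction φ φ' →
        (∀ t : ℝ, 0 < t → p ≤ φ' t * t / φ t ∧ φ' t * t / φ t ≤ q) →
        ∀ s t : ℝ, 0 ≤ s → 0 ≤ t → φ' s * t ≤ C * φ s + ε * φ t := by
  intro ε hε
  have hq1 : (1 : ℝ) < q := lt_of_lt_of_le hp hpq
  have hq0 : (0 : ℝ) < q := by linarith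
  have hp1 : (0 : ℝ) < 1 + p := by linarith
  set r : ℝ := 2 / (1 + p) with hr
  have hr0 : 0 ≤ r := by positivity
  have hr1 : r < 1 := by
    rw [hr, div_lt_one hp1]; linarith
  obtain ⟨n, hn⟩ : ∃ n : ℕ, r ^ n < ε / q :=
    exists_pow_lt_of_lt_one (by positivity) hr1
  have hqrn : q * r ^ n ≤ ε := by
    rw [← le_div_iff₀' hq0]; exact hn.le
  refine ⟨2 ^ n * q, by positivity, ?_⟩
  intro φ φ' hN hidx s t hs ht
  -- φ is positive on (0,∞)
  have hφpos : ∀ u : ℝ, 0 < u → 0 < φ u := by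
    intro u hu
    rcases lt_or_eq_of_le (hN.nonneg u hu.le) with h | h
    · exact h
    · exfalso
      have h1 := (hidx u hu).1
      rw [← h, div_zero] at h1
      linarith
  -- upper Simonenko bound
  have hqb : ∀ u : ℝ, 0 < u → φ' u * u ≤ q * φ u := by
    intro u hu
    have := (hidx u hu).2
    rw [div_le_iff₀ (hφpos u hu)] at this
    linarith [this]
  -- lower Simonenko bound
  have hpb : ∀ u : ℝ, 0 < u → p * φ u ≤ φ' u * u := by
    intro u hu
    have := (hidx u hu).1
    rw [le_div_iff₀ (hφpos u hu)] at this
    linarith [this]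
  -- doubling: (1+p) φ(u/2) ≤ φ(u)
  have hA : ∀ u : ℝ, 0 < u → (1 + p) * φ (u / 2) ≤ φ u := by
    intro u hu
    have h2 : 0 < u / 2 := by linarith
    have hmono : MonotoneOn φ' (Set.Icc 0 u) := by
      intro a ha b hb hab; exact hN.deriv_mono a b ha.1 hab
    have hint1 : IntervalIntegrable φ' MeasureTheory.volume 0 (u / 2) := by
      apply (hmono.mono ?_).intervalIntegrable
      rw [Set.uIcc_of_le h2.le]
      exact Set.Icc_subset_Icc le_rfl (by linarith)
    have hint2 : IntervalIntegrable φ' MeasureTheory.volume (u / 2) u := by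
      apply (hmono.mono ?_).intervalIntegrable
      rw [Set.uIcc_of_le (by linarith : u / 2 ≤ u)]
      exact Set.Icc_subset_Icc h2.le le_rfl
    have key : φ u = φ (u / 2) + ∫ x in (u / 2)..u, φ' x := by
      rw [hN.eq_integral u hu, hN.eq_integral (u / 2) h2,
        ← intervalIntegral.integral_add_adjacent_intervals hint1 hint2]
    have low : φ' (u / 2) * (u / 2) ≤ ∫ x in (u / 2)..u, φ' x := by
      have hc : (∫ _ in (u / 2)..u, φ' (u / 2)) = (u - u / 2) • φ' (u / 2) :=
        intervalIntegral.integral_const _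
      have hmono2 : (∫ _ in (u / 2)..u, φ' (u / 2)) ≤ ∫ x in (u / 2)..u, φ' x := by
        apply intervalIntegral.integral_mono_on (by linarith) intervalIntegrable_const hint2
        intro x hx
        exact hN.deriv_mono (u / 2) x h2.le hx.1
      rw [hc] at hmono2
      have : (u - u / 2) • φ' (u / 2) = φ' (u / 2) * (u / 2) := by
        simp [smul_eq_mul]; ring
      linarith [hmono2, this ▸ hmono2]
    have hpb2 := hpb (u / 2) h2
    linarith [key, low, hpb2]
  -- iterated doubling
  have hC : ∀ (k : ℕ) (u : ℝ), 0 < u → φ (u / 2 ^ k) ≤ (1 / (1 + p)) ^ k * φ u := by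
    intro k
    induction k with
    | zero => intro u hu; simp
    | succ k ih =>
      intro u hu
      have hk : (0 : ℝ) < u / 2 ^ k := by positivity
      have heq : u / 2 ^ (k + 1) = (u / 2 ^ k) / 2 := by
        rw [pow_succ]; ring
      have h1 := hA (u / 2 ^ k) hk
      have h2 := ih u hu
      rw [heq]
      have : φ ((u / 2 ^ k) / 2) ≤ (1 / (1 + p)) * φ (u / 2 ^ k) := by
        rw [one_div, le_inv_mul_iff₀ hp1]
        linarith
      calc φ ((u / 2 ^ k) / 2) ≤ (1 / (1 + p)) * φ (u / 2 ^ k) := this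
        _ ≤ (1 / (1 + p)) * ((1 / (1 + p)) ^ k * φ u) := by
            apply mul_le_mul_of_nonneg_left h2 (by positivity)
        _ = (1 / (1 + p)) ^ (k + 1) * φ u := by ring
  -- basic Young-type inequality
  have hB : ∀ a b : ℝ, 0 ≤ a → 0 < b → φ' a * b ≤ q * φ a + q * φ b := by
    intro a b ha hb
    have hφa := hN.nonneg a ha
    have hφb := hN.nonneg b hb.le
    rcases le_or_gt b a with h | h
    · have ha' : 0 < a := lt_of_lt_of_le hb h
      have : φ' a * b ≤ φ' a * a :=
        mul_le_mul_of_nonneg_left h (hN.deriv_nonneg a ha)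
      have h2 := hqb a ha'
      nlinarith [mul_nonneg hq0.le hφb]
    · have : φ' a * b ≤ φ' b * b :=
        mul_le_mul_of_nonneg_right (hN.deriv_mono a b ha h.le) hb.le
      have h2 := hqb b hb
      nlinarith [mul_nonneg hq0.le hφa]
  -- main inequality
  rcases eq_or_lt_of_le ht with h0 | h0
  · rw [← h0, hN.map_zero]
    have h1 := hN.nonneg s hs
    have h2n : (0 : ℝ) < (2 : ℝ) ^ n := by positivity
    nlinarith [mul_nonneg (mul_nonneg h2n.le hq0.le) h1]
  · have h2n : (0 : ℝ) < (2 : ℝ) ^ n := by positivity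
    have hsc : (0 : ℝ) < t / 2 ^ n := by positivity
    have step1 : φ' s * t = 2 ^ n * (φ' s * (t / 2 ^ n)) := by
      field_simp
    have step2 := hB s (t / 2 ^ n) hs hsc
    have step3 := hC n t h0
    have hrn : r ^ n = 2 ^ n * ((1 / (1 + p)) ^ n) := by
      rw [hr, div_pow, div_pow, one_pow]; ring
    have hmul : 2 ^ n * (q * ((1 / (1 + p)) ^ n * φ t)) = q * r ^ n * φ t := by
      rw [hrn]; ring
    have hφt := hN.nonneg t ht
    calc φ' s * t = 2 ^ n * (φ' s * (t / 2 ^ n)) := step1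
      _ ≤ 2 ^ n * (q * φ s + q * φ (t / 2 ^ n)) := by
          apply mul_le_mul_of_nonneg_left step2 h2n.le
      _ ≤ 2 ^ n * (q * φ s + q * ((1 / (1 + p)) ^ n * φ t)) := by
          apply mul_le_mul_of_nonneg_left _ h2n.le
          have := mul_le_mul_of_nonneg_left step3 hq0.le
          linarith
      _ = 2 ^ n * q * φ s + q * r ^ n * φ t := by rw [mul_add, hmul]; ring
      _ ≤ 2 ^ n * q * φ s + ε * φ t := by
          have := mul_le_mul_of_nonneg_right hqrn hφt
          linarith
end
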